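/- Let λ₁,λ₂,λ₃,λ₄ ∈ ℝ and let 𝔤 be the 4-dimensional real Lie algebra with orthonormal basis X₁,X₂,X₃,X₄ (inner product g), brackets [X₁,X₂] = −[X₃,X₄] = λ₁X₁ + λ₂X₂ + λ₃X₃ + λ₄X₄, [X₁,X₃] = [X₂,X₄] = λ₄X₁ − λ₃X₂ + λ₂X₃ − λ₁X₄, [X₂,X₃] = [X₁,X₄] = 0, and P the linear map with PX₁ = X₃, PX₂ = X₄, PX₃ = X₁, PX₄ = X₂. Define ∇ by 2g(∇ₓy,z) = g([x,y],z) + g([z,x],y) + g([z,y],x), the 1-form θ with θ(X₁) = 4λ₄, θ(X₂) = −4λ₃, θ(X₃) = −4λ₂, θ(X₄) = 4λ₁, the vector Ω with g(Ω,x) = θ(x), and the connection Dₓy = ∇ₓy + (1/4){g(x,y)PΩ − θ(Py)x}. Then the curvature of D vanishes identically: DₓD_y z − D_y Dₓ z − D_{[x,y]} z = 0 for all x,y,z ∈ 𝔤. -/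

import Mathlib

open scoped RealInnerProductSpace

/-- On the example manifold of the paper, the natural connection
`Dₓy = ∇ₓy + (1/4){g(x,y)PΩ − θ(Py)x}` is flat:
`DₓD_y z − D_y Dₓ z − D_{[x,y]} z = 0`. -/
theorem statement_16
    (l1 l2 l3 l4 : ℝ)
    (X : Fin 4 → EuclideanSpace ℝ (Fin 4))
    (hX : ∀ i, X i = EuclideanSpace.single i 1)
    (bracket : EuclideanSpace ℝ (Fin 4) →ₗ[ℝ] EuclideanSpace ℝ (Fin 4) →ₗ[ℝ] EuclideanSpace ℝ (Fin 4))
    (hskew : ∀ x y, bracket x y = - bracket y x)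
    (hjacobi : ∀ x y z,
      bracket (bracket x y) z + bracket (bracket y z) x + bracket (bracket z x) y = 0)
    (h12 : bracket (X 0) (X 1) = l1 • X 0 + l2 • X 1 + l3 • X 2 + l4 • X 3)
    (h34 : bracket (X 2) (X 3) = -(l1 • X 0 + l2 • X 1 + l3 • X 2 + l4 • X 3))
    (h13 : bracket (X 0) (X 2) = l4 • X 0 - l3 • X 1 + l2 • X 2 - l1 • X 3)
    (h24 : bracket (X 1) (X 3) = l4 • X 0 - l3 • X 1 + l2 • X 2 - l1 • X 3)
    (h23 : bracket (X 1) (X 2) = 0)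
    (h14 : bracket (X 0) (X 3) = 0)
    (nabla : EuclideanSpace ℝ (Fin 4) → EuclideanSpace ℝ (Fin 4) → EuclideanSpace ℝ (Fin 4))
    (hKoszul : ∀ x y z, 2 * ⟪nabla x y, z⟫
      = ⟪bracket x y, z⟫ + ⟪bracket z x, y⟫ + ⟪bracket z y, x⟫)
    (P : EuclideanSpace ℝ (Fin 4) →ₗ[ℝ] EuclideanSpace ℝ (Fin 4))
    (hP1 : P (X 0) = X 2) (hP2 : P (X 1) = X 3) (hP3 : P (X 2) = X 0) (hP4 : P (X 3) = X 1)
    (θ : EuclideanSpace ℝ (Fin 4) →ₗ[ℝ] ℝ)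
    (hθ1 : θ (X 0) = 4 * l4) (hθ2 : θ (X 1) = -4 * l3)
    (hθ3 : θ (X 2) = -4 * l2) (hθ4 : θ (X 3) = 4 * l1)
    (Ω : EuclideanSpace ℝ (Fin 4)) (hΩ : ∀ x, ⟪Ω, x⟫ = θ x)
    (D : EuclideanSpace ℝ (Fin 4) → EuclideanSpace ℝ (Fin 4) → EuclideanSpace ℝ (Fin 4))
    (hD : ∀ x y, D x y = nabla x y + ((1 : ℝ) / 4) • (⟪x, y⟫ • P Ω - θ (P y) • x)) :
    ∀ x y z, D x (D y z) - D y (D x z) - D (bracket x y) z = 0 := by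
  -- basis expansion
  have hvc : ∀ v : EuclideanSpace ℝ (Fin 4),
      v = v 0 • X 0 + v 1 • X 1 + v 2 • X 2 + v 3 • X 3 := by
    intro v
    simp only [hX]
    ext i; fin_cases i <;> simp [EuclideanSpace.single_apply]
  -- coordinates of X
  have hXa : ∀ (j i : Fin 4), X j i = if i = j then (1 : ℝ) else 0 := by
    intro j i; rw [hX]; exact EuclideanSpace.single_apply j 1 i
  -- inner product formula
  have hin : ∀ u v : EuclideanSpace ℝ (Fin 4),
      ⟪u, v⟫ = u 0 * v 0 + u 1 * v 1 + u 2 * v 2 + u 3 * v 3 := by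
    intro u v
    simp [PiLp.inner_apply, Fin.sum_univ_four, RCLike.inner_apply, starRingEnd_apply]
    ring
  -- coordinate extraction via inner with X i
  have hcoord : ∀ (w : EuclideanSpace ℝ (Fin 4)) (i : Fin 4), ⟪w, X i⟫ = w i := by
    intro w i; rw [hX]; simp [EuclideanSpace.inner_single_right]
  -- diagonal brackets vanish
  have hzero : ∀ v, bracket v v = 0 := by
    intro v
    have h := hskew v v
    have h2 : (2 : ℝ) • bracket v v = 0 := by
      rw [two_smul]; nth_rewrite 2 [h]; simp
    rcases smul_eq_zero.mp h2 with h' | h'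
    · norm_num at h'
    · exact h'
  -- reversed brackets
  have h21 : bracket (X 1) (X 0) = -(l1 • X 0 + l2 • X 1 + l3 • X 2 + l4 • X 3) := by
    rw [hskew, h12]
  have h43 : bracket (X 3) (X 2) = l1 • X 0 + l2 • X 1 + l3 • X 2 + l4 • X 3 := by
    rw [hskew, h34]; simp
  have h31 : bracket (X 2) (X 0) = -(l4 • X 0 - l3 • X 1 + l2 • X 2 - l1 • X 3) := by
    rw [hskew, h13]
  have h42 : bracket (X 3) (X 1) = -(l4 • X 0 - l3 • X 1 + l2 • X 2 - l1 • X 3) := by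
    rw [hskew, h24]
  have h32 : bracket (X 2) (X 1) = 0 := by rw [hskew, h23]; simp
  have h41 : bracket (X 3) (X 0) = 0 := by rw [hskew, h14]; simp
  -- bracket coordinates
  have hbv : ∀ u v : EuclideanSpace ℝ (Fin 4),
      bracket u v = (u 0 * v 1 - u 1 * v 0 - u 2 * v 3 + u 3 * v 2) •
          (l1 • X 0 + l2 • X 1 + l3 • X 2 + l4 • X 3)
        + (u 0 * v 2 - u 2 * v 0 + u 1 * v 3 - u 3 * v 1) •
          (l4 • X 0 - l3 • X 1 + l2 • X 2 - l1 • X 3) := by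
    intro u v
    conv_lhs => rw [hvc u, hvc v]
    simp only [map_add, map_smul, LinearMap.add_apply, LinearMap.smul_apply,
      h12, h34, h13, h24, h23, h14, h21, h43, h31, h42, h32, h41, hzero,
      smul_zero, add_zero, zero_add]
    module
  have hb0 : ∀ u v : EuclideanSpace ℝ (Fin 4), (bracket u v) 0 =
      l1*u 0*v 1 - l1*u 1*v 0 - l1*u 2*v 3 + l1*u 3*v 2 + l4*u 0*v 2 + l4*u 1*v 3 - l4*u 2*v 0 - l4*u 3*v 1 := by
    intro u v; rw [hbv]
    simp only [PiLp.add_apply, PiLp.smul_apply, PiLp.sub_apply, hXa, smul_eq_mul]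
    simp only [Fin.reduceEq, reduceIte, mul_zero, mul_one, add_zero, zero_add, sub_zero, zero_sub, mul_neg, neg_neg]
    ring
  have hb1 : ∀ u v : EuclideanSpace ℝ (Fin 4), (bracket u v) 1 =
      l2*u 0*v 1 - l2*u 1*v 0 - l2*u 2*v 3 + l2*u 3*v 2 - l3*u 0*v 2 - l3*u 1*v 3 + l3*u 2*v 0 + l3*u 3*v 1 := by
    intro u v; rw [hbv]
    simp only [PiLp.add_apply, PiLp.smul_apply, PiLp.sub_apply, hXa, smul_eq_mul]
    simp only [Fin.reduceEq, reduceIte, mul_zero, mul_one, add_zero, zero_add, sub_zero, zero_sub, mul_neg, neg_neg]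
    ring
  have hb2 : ∀ u v : EuclideanSpace ℝ (Fin 4), (bracket u v) 2 =
      l2*u 0*v 2 + l2*u 1*v 3 - l2*u 2*v 0 - l2*u 3*v 1 + l3*u 0*v 1 - l3*u 1*v 0 - l3*u 2*v 3 + l3*u 3*v 2 := by
    intro u v; rw [hbv]
    simp only [PiLp.add_apply, PiLp.smul_apply, PiLp.sub_apply, hXa, smul_eq_mul]
    simp only [Fin.reduceEq, reduceIte, mul_zero, mul_one, add_zero, zero_add, sub_zero, zero_sub, mul_neg, neg_neg]
    ring
  have hb3 : ∀ u v : EuclideanSpace ℝ (Fin 4), (bracket u v) 3 =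
      -(l1*u 0*v 2) - l1*u 1*v 3 + l1*u 2*v 0 + l1*u 3*v 1 + l4*u 0*v 1 - l4*u 1*v 0 - l4*u 2*v 3 + l4*u 3*v 2 := by
    intro u v; rw [hbv]
    simp only [PiLp.add_apply, PiLp.smul_apply, PiLp.sub_apply, hXa, smul_eq_mul]
    simp only [Fin.reduceEq, reduceIte, mul_zero, mul_one, add_zero, zero_add, sub_zero, zero_sub, mul_neg, neg_neg]
    ring
  -- θ coordinates
  have hθc : ∀ v : EuclideanSpace ℝ (Fin 4),
      θ v = 4*l4*v 0 - 4*l3*v 1 - 4*l2*v 2 + 4*l1*v 3 := by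
    intro v
    conv_lhs => rw [hvc v]
    simp only [map_add, map_smul, hθ1, hθ2, hθ3, hθ4, smul_eq_mul]
    ring
  -- P coordinates
  have hPv : ∀ v : EuclideanSpace ℝ (Fin 4),
      P v = v 2 • X 0 + v 3 • X 1 + v 0 • X 2 + v 1 • X 3 := by
    intro v
    conv_lhs => rw [hvc v]
    simp only [map_add, map_smul, hP1, hP2, hP3, hP4]
    module
  -- Ω coordinates
  have hΩc : ∀ i, Ω i = θ (X i) := fun i => (hcoord Ω i).symm.trans (hΩ (X i))
  -- nabla coordinates
  have hn : ∀ (u v : EuclideanSpace ℝ (Fin 4)) (i : Fin 4), (nabla u v) i =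
      (1/2) * ((bracket u v) i + ⟪bracket (X i) u, v⟫ + ⟪bracket (X i) v, u⟫) := by
    intro u v i
    have h := hKoszul u v (X i)
    rw [hcoord, hcoord] at h
    linarith
  -- D coordinates
  have hD0 : ∀ u v : EuclideanSpace ℝ (Fin 4), (D u v) 0 =
      (l3*u 0 + l4*u 1 - l1*u 2 - l2*u 3) * v 3 := by
    intro u v
    rw [hD]
    simp only [PiLp.add_apply, PiLp.smul_apply, PiLp.sub_apply, smul_eq_mul]
    rw [hn, hb0, hin (bracket (X 0) u) v, hin (bracket (X 0) v) u,
      hb0, hb1, hb2, hb3, hb0, hb1, hb2, hb3, hin u v, hθc (P v), hPv v, hPv Ω]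
    simp only [PiLp.add_apply, PiLp.smul_apply, hXa, smul_eq_mul, hΩc, hθ1, hθ2, hθ3, hθ4]
    simp only [Fin.reduceEq, reduceIte, mul_zero, mul_one, add_zero, zero_add, sub_zero, zero_sub, mul_neg, neg_neg]
    ring
  have hD1 : ∀ u v : EuclideanSpace ℝ (Fin 4), (D u v) 1 =
      -((l3*u 0 + l4*u 1 - l1*u 2 - l2*u 3) * v 2) := by
    intro u v
    rw [hD]
    simp only [PiLp.add_apply, PiLp.smul_apply, PiLp.sub_apply, smul_eq_mul]
    rw [hn, hb1, hin (bracket (X 1) u) v, hin (bracket (X 1) v) u,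
      hb0, hb1, hb2, hb3, hb0, hb1, hb2, hb3, hin u v, hθc (P v), hPv v, hPv Ω]
    simp only [PiLp.add_apply, PiLp.smul_apply, hXa, smul_eq_mul, hΩc, hθ1, hθ2, hθ3, hθ4]
    simp only [Fin.reduceEq, reduceIte, mul_zero, mul_one, add_zero, zero_add, sub_zero, zero_sub, mul_neg, neg_neg]
    ring
  have hD2 : ∀ u v : EuclideanSpace ℝ (Fin 4), (D u v) 2 =
      (l3*u 0 + l4*u 1 - l1*u 2 - l2*u 3) * v 1 := by
    intro u v
    rw [hD]
    simp only [PiLp.add_apply, PiLp.smul_apply, PiLp.sub_apply, smul_eq_mul]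
    rw [hn, hb2, hin (bracket (X 2) u) v, hin (bracket (X 2) v) u,
      hb0, hb1, hb2, hb3, hb0, hb1, hb2, hb3, hin u v, hθc (P v), hPv v, hPv Ω]
    simp only [PiLp.add_apply, PiLp.smul_apply, hXa, smul_eq_mul, hΩc, hθ1, hθ2, hθ3, hθ4]
    simp only [Fin.reduceEq, reduceIte, mul_zero, mul_one, add_zero, zero_add, sub_zero, zero_sub, mul_neg, neg_neg]
    ring
  have hD3 : ∀ u v : EuclideanSpace ℝ (Fin 4), (D u v) 3 =
      -((l3*u 0 + l4*u 1 - l1*u 2 - l2*u 3) * v 0) := by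
    intro u v
    rw [hD]
    simp only [PiLp.add_apply, PiLp.smul_apply, PiLp.sub_apply, smul_eq_mul]
    rw [hn, hb3, hin (bracket (X 3) u) v, hin (bracket (X 3) v) u,
      hb0, hb1, hb2, hb3, hb0, hb1, hb2, hb3, hin u v, hθc (P v), hPv v, hPv Ω]
    simp only [PiLp.add_apply, PiLp.smul_apply, hXa, smul_eq_mul, hΩc, hθ1, hθ2, hθ3, hθ4]
    simp only [Fin.reduceEq, reduceIte, mul_zero, mul_one, add_zero, zero_add, sub_zero, zero_sub, mul_neg, neg_neg]
    ring
  -- final computation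
  intro x y z
  have key : ∀ i : Fin 4,
      (D x (D y z) - D y (D x z) - D (bracket x y) z) i = 0 := by
    intro i
    fin_cases i
    · show (D x (D y z) - D y (D x z) - D (bracket x y) z) 0 = 0
      simp only [PiLp.sub_apply, hD0, hD1, hD2, hD3, hb0, hb1, hb2, hb3]; ring
    · show (D x (D y z) - D y (D x z) - D (bracket x y) z) 1 = 0
      simp only [PiLp.sub_apply, hD0, hD1, hD2, hD3, hb0, hb1, hb2, hb3]; ring
    · show (D x (D y z) - D y (D x z) - D (bracket x y) z) 2 = 0
      simp only [PiLp.sub_apply, hD0, hD1, hD2, hD3, hb0, hb1, hb2, hb3]; ring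
    · show (D x (D y z) - D y (D x z) - D (bracket x y) z) 3 = 0
      simp only [PiLp.sub_apply, hD0, hD1, hD2, hD3, hb0, hb1, hb2, hb3]; ring
  ext i
  exact key i
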